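/- The method of equal shares violates participation for unrepresented voters: there exist a candidate set C, a committee size k, an approval profile A, and a voter i ∈ N_A such that every committee W ∈ f(A,k) satisfies W ∩ A_i = ∅ and yet f(A_{-i},k) ≻_i f(A,k), where f is MES. Concretely, this holds for k = 5 and the profile with ballots 20×{x_1,x_2,x_3}, 10×{y_1,y_2}, 10×{y_1,y_2,z}, 9×{z,c}, 2×{c}, with i one of the two voters approving only c: candidate c is in no winning committee for A, but in every winning committee for A_{-i}. -/

import Mathlib

/-- An approval profile is a multiset of approval ballots (anonymous encoding):
each ballot is a nonempty subset of the candidates, and the electorate is nonempty. -/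
def validProfile {C : Type*} [DecidableEq C] (A : Multiset (Finset C)) : Prop :=
  A ≠ 0 ∧ ∀ b ∈ A, b ≠ (∅ : Finset C)

/-- Kelly's extension, weak preference. -/
def KellyWeak {C : Type*} [DecidableEq C] (b : Finset C) (X Y : Set (Finset C)) : Prop :=
  ∀ W ∈ X, ∀ W' ∈ Y, (W' ∩ b).card ≤ (W ∩ b).card

/-- Kelly's extension, strict preference. -/
def KellyStrict {C : Type*} [DecidableEq C] (b : Finset C) (X Y : Set (Finset C)) : Prop :=
  KellyWeak b X Y ∧ ∃ W ∈ X, ∃ W' ∈ Y, (W' ∩ b).card < (W ∩ b).card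

/-- Total budget of the supporters of candidate `c`, where the budget function `x` is
keyed by ballots (voters with equal ballots always carry equal budgets). -/
def supBudget {C : Type*} [DecidableEq C] (A : Multiset (Finset C))
    (x : Finset C → ℚ) (c : C) : ℚ :=
  ((A.filter fun b => c ∈ b).map x).sum

/-- Candidate `c` is affordable: its supporters have a total budget of at least 1. -/
def mesAfford {C : Type*} [DecidableEq C] (A : Multiset (Finset C))
    (x : Finset C → ℚ) (c : C) : Prop :=
  1 ≤ supBudget A x c

/-- `ρ` is the per-voter price of candidate `c`: splitting the cost 1 as equally as
possible, `Σ_{i ∈ N_A(c)} min(ρ, x_i) = 1`, with `ρ` minimal such. -/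
def mesRho {C : Type*} [DecidableEq C] (A : Multiset (Finset C))
    (x : Finset C → ℚ) (c : C) (ρ : ℚ) : Prop :=
  ((A.filter fun b => c ∈ b).map fun b => min ρ (x b)).sum = 1 ∧
  ∀ ρ' : ℚ, ((A.filter fun b => c ∈ b).map fun b => min ρ' (x b)).sum = 1 → ρ ≤ ρ'

/-- `mesPhase1 A x E L xf`: starting from budgets `x` and already elected candidates
`E`, the sequence `L` is a valid run of Phase 1 of MES ending with budgets `xf`: each
elected candidate is affordable and minimizes the maximal per-voter payment `ρ` among
the affordable unelected candidates, and budgets are reduced accordingly. -/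
def mesPhase1 {C : Type*} [DecidableEq C] (A : Multiset (Finset C)) :
    (Finset C → ℚ) → Finset C → List C → (Finset C → ℚ) → Prop
  | x, _, [], xf => xf = x
  | x, E, c :: rest, xf =>
      c ∉ E ∧ mesAfford A x c ∧
      ∃ ρ : ℚ, mesRho A x c ρ ∧
        (∀ d : C, d ∉ E → mesAfford A x d → ∀ ρ' : ℚ, mesRho A x d ρ' → ρ ≤ ρ') ∧
        mesPhase1 A (fun b => if c ∈ b then x b - min ρ (x b) else x b)
          (insert c E) rest xf

/-- In the Phragmén completion phase, `buyTime A x c` is the time at which candidate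
`c` would be bought when every voter's budget grows uniformly from `x`: the first time
`t ≥ 0` at which the supporters' total budget reaches 1. -/
def buyTime {C : Type*} [DecidableEq C] (A : Multiset (Finset C))
    (x : Finset C → ℚ) (c : C) : ℚ :=
  max 0 ((1 - supBudget A x c) / ((Multiset.card (A.filter fun b => c ∈ b) : ℚ)))

/-- `mesPhase2 A x E L`: starting from budgets `x` (kept from Phase 1) and already
elected candidates `E`, the sequence `L` is a valid run of the seqPhragmén completion
(Phase 2) of MES: budgets grow uniformly over time, each elected candidate is bought
as soon as its supporters' total budget reaches 1 (i.e. it minimizes the buying time),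
whereupon its supporters' budgets are reset to 0. -/
def mesPhase2 {C : Type*} [DecidableEq C] (A : Multiset (Finset C)) :
    (Finset C → ℚ) → Finset C → List C → Prop
  | _, _, [] => True
  | x, E, c :: rest =>
      c ∉ E ∧ (A.filter fun b => c ∈ b) ≠ 0 ∧
      (∀ d : C, d ∉ E → (A.filter fun b => d ∈ b) ≠ 0 →
        buyTime A x c ≤ buyTime A x d) ∧
      mesPhase2 A (fun b => if c ∈ b then 0 else x b + buyTime A x c) (insert c E) rest

/-- The method of equal shares (with the seqPhragmén completion): every voter starts
with budget `k/n`; Phase 1 runs until either `k` candidates are elected or no further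
candidate is affordable, in which case Phase 2 completes the committee. -/
def mes {C : Type*} [DecidableEq C] (A : Multiset (Finset C)) (k : ℕ) :
    Set (Finset C) :=
  {W | ∃ (L1 : List C) (xf : Finset C → ℚ),
      mesPhase1 A (fun _ => (k : ℚ) / (Multiset.card A : ℚ)) ∅ L1 xf ∧
      ((L1.length = k ∧ W = L1.toFinset) ∨
        (L1.length < k ∧
          (∀ c : C, c ∉ L1.toFinset → ¬ mesAfford A xf c) ∧
          ∃ L2 : List C, mesPhase2 A xf L1.toFinset L2 ∧
            (L1 ++ L2).length = k ∧ W = (L1 ++ L2).toFinset))}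

/-- The concrete counterexample profile on the candidate set
`{x₁,x₂,x₃,y₁,y₂,z,c} = {0,1,2,3,4,5,6}`:
ballots `20×{x₁,x₂,x₃}`, `10×{y₁,y₂}`, `10×{y₁,y₂,z}`, `9×{z,c}`, `2×{c}`. -/
def counterProfile : Multiset (Finset (Fin 7)) :=
  Multiset.replicate 20 ({0, 1, 2} : Finset (Fin 7)) +
  Multiset.replicate 10 ({3, 4} : Finset (Fin 7)) +
  Multiset.replicate 10 ({3, 4, 5} : Finset (Fin 7)) +
  Multiset.replicate 9 ({5, 6} : Finset (Fin 7)) +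
  Multiset.replicate 2 ({6} : Finset (Fin 7))


set_option maxRecDepth 8000

namespace MESaux
abbrev F := Fin 7
def Bx : Finset F := {0,1,2}
def By : Finset F := {3,4}
def Byz : Finset F := {3,4,5}
def Bzc : Finset F := {5,6}
def Bc : Finset F := {6}


abbrev P : Multiset (Finset F) := counterProfile
abbrev P' : Multiset (Finset F) := counterProfile.erase ({6} : Finset F)

lemma memX : ∀ c ∈ Bx, c ∉ By ∧ c ∉ Byz ∧ c ∉ Bzc ∧ c ∉ Bc ∧ c ≠ 5 ∧ c ≠ 6 := by decide
lemma memY : ∀ c ∈ By, c ∉ Bx ∧ c ∈ Byz ∧ c ∉ Bzc ∧ c ∉ Bc ∧ c ≠ 5 ∧ c ≠ 6 := by decide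
lemma classes : ∀ c : F, c ∈ Bx ∨ c ∈ By ∨ c = 5 ∨ c = 6 := by decide

lemma filtPX : ∀ c ∈ Bx, P.filter (fun b => c ∈ b) = Multiset.replicate 20 Bx := by decide
lemma filtPY : ∀ c ∈ By, P.filter (fun b => c ∈ b) =
    Multiset.replicate 10 By + Multiset.replicate 10 Byz := by decide
lemma filtP5 : P.filter (fun b => (5:F) ∈ b) =
    Multiset.replicate 10 Byz + Multiset.replicate 9 Bzc := by decide
lemma filtP6 : P.filter (fun b => (6:F) ∈ b) =
    Multiset.replicate 9 Bzc + Multiset.replicate 2 Bc := by decide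

lemma filtP'X : ∀ c ∈ Bx, P'.filter (fun b => c ∈ b) = Multiset.replicate 20 Bx := by decide
lemma filtP'Y : ∀ c ∈ By, P'.filter (fun b => c ∈ b) =
    Multiset.replicate 10 By + Multiset.replicate 10 Byz := by decide
lemma filtP'5 : P'.filter (fun b => (5:F) ∈ b) =
    Multiset.replicate 10 Byz + Multiset.replicate 9 Bzc := by decide
lemma filtP'6 : P'.filter (fun b => (6:F) ∈ b) =
    Multiset.replicate 9 Bzc + Multiset.replicate 1 Bc := by decide

lemma mapRepl (n : ℕ) (b : Finset F) (f : Finset F → ℚ) :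
    ((Multiset.replicate n b).map f).sum = n * f b := by
  simp [Multiset.map_replicate, Multiset.sum_replicate, nsmul_eq_mul]; try ring

lemma mapPX {c : F} (hc : c ∈ Bx) (f : Finset F → ℚ) :
    ((P.filter fun b => c ∈ b).map f).sum = 20 * f Bx := by
  rw [filtPX c hc, mapRepl]; norm_num
lemma mapPY {c : F} (hc : c ∈ By) (f : Finset F → ℚ) :
    ((P.filter fun b => c ∈ b).map f).sum = 10 * f By + 10 * f Byz := by
  rw [filtPY c hc]; simp [Multiset.map_replicate, Multiset.sum_replicate, nsmul_eq_mul]; try ring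
lemma mapP5 (f : Finset F → ℚ) :
    ((P.filter fun b => (5:F) ∈ b).map f).sum = 10 * f Byz + 9 * f Bzc := by
  rw [filtP5]; simp [Multiset.map_replicate, Multiset.sum_replicate, nsmul_eq_mul]; try ring
lemma mapP6 (f : Finset F → ℚ) :
    ((P.filter fun b => (6:F) ∈ b).map f).sum = 9 * f Bzc + 2 * f Bc := by
  rw [filtP6]; simp [Multiset.map_replicate, Multiset.sum_replicate, nsmul_eq_mul]; try ring

lemma mapP'X {c : F} (hc : c ∈ Bx) (f : Finset F → ℚ) :
    ((P'.filter fun b => c ∈ b).map f).sum = 20 * f Bx := by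
  rw [filtP'X c hc, mapRepl]; norm_num
lemma mapP'Y {c : F} (hc : c ∈ By) (f : Finset F → ℚ) :
    ((P'.filter fun b => c ∈ b).map f).sum = 10 * f By + 10 * f Byz := by
  rw [filtP'Y c hc]; simp [Multiset.map_replicate, Multiset.sum_replicate, nsmul_eq_mul]; try ring
lemma mapP'5 (f : Finset F → ℚ) :
    ((P'.filter fun b => (5:F) ∈ b).map f).sum = 10 * f Byz + 9 * f Bzc := by
  rw [filtP'5]; simp [Multiset.map_replicate, Multiset.sum_replicate, nsmul_eq_mul]; try ring
lemma mapP'6 (f : Finset F → ℚ) :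
    ((P'.filter fun b => (6:F) ∈ b).map f).sum = 9 * f Bzc + 1 * f Bc := by
  rw [filtP'6]; simp [Multiset.map_replicate, Multiset.sum_replicate, nsmul_eq_mul]; try ring

lemma mesRho_unique {A : Multiset (Finset F)} {x : Finset F → ℚ} {c : F} {ρ ρ' : ℚ}
    (h1 : mesRho A x c ρ) (h2 : mesRho A x c ρ') : ρ = ρ' :=
  le_antisymm (h1.2 _ h2.1) (h2.2 _ h1.1)

end MESaux
namespace MESaux

lemma cardPX {c : F} (hc : c ∈ Bx) : Multiset.card (P.filter fun b => c ∈ b) = 20 := by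
  rw [filtPX c hc]; simp
lemma cardPY {c : F} (hc : c ∈ By) : Multiset.card (P.filter fun b => c ∈ b) = 20 := by
  rw [filtPY c hc]; simp
lemma cardP5 : Multiset.card (P.filter fun b => (5:F) ∈ b) = 19 := by rw [filtP5]; simp
lemma cardP6 : Multiset.card (P.filter fun b => (6:F) ∈ b) = 11 := by rw [filtP6]; simp

lemma ne0PX {c : F} (hc : c ∈ Bx) : (P.filter fun b => c ∈ b) ≠ 0 := by
  rw [filtPX c hc]; simp
lemma ne0PY {c : F} (hc : c ∈ By) : (P.filter fun b => c ∈ b) ≠ 0 := by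
  rw [filtPY c hc]; simp
lemma ne0P6 : (P.filter fun b => (6:F) ∈ b) ≠ 0 := by rw [filtP6]; simp

/-- values of a budget function on the five ballot types -/
def Vals (x : Finset F → ℚ) (a b c d e : ℚ) : Prop :=
  x Bx = a ∧ x By = b ∧ x Byz = c ∧ x Bzc = d ∧ x Bc = e

-- mesRho constructors for profile P
lemma rhoPX {x : Finset F → ℚ} {c : F} {v : ℚ} (hc : c ∈ Bx) (h1 : x Bx = v)
    (hv : 1/20 ≤ v) : mesRho P x c (1/20) := by
  constructor
  · simp only [mapPX hc, h1, min_eq_left hv]; norm_num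
  · intro ρ' h; simp only [mapPX hc, h1] at h
    have := min_le_left ρ' v; linarith
lemma rhoPY {x : Finset F → ℚ} {c : F} {v w : ℚ} (hc : c ∈ By) (h2 : x By = v)
    (h3 : x Byz = w) (hv : 1/20 ≤ v) (hw : 1/20 ≤ w) : mesRho P x c (1/20) := by
  constructor
  · simp only [mapPY hc, h2, h3, min_eq_left hv, min_eq_left hw]; norm_num
  · intro ρ' h; simp only [mapPY hc, h2, h3] at h
    have := min_le_left ρ' v; have := min_le_left ρ' w; linarith
lemma rhoP5a {x : Finset F → ℚ} (h3 : x Byz = 5/51) (h4 : x Bzc = 5/51) :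
    mesRho P x 5 (1/19) := by
  constructor
  · simp only [mapP5, h3, h4]; norm_num [min_def]
  · intro ρ' h; simp only [mapP5, h3, h4] at h
    have := min_le_left ρ' ((5:ℚ)/51); linarith
lemma rhoP5b {x : Finset F → ℚ} (h3 : x Byz = 49/1020) (h4 : x Bzc = 5/51) :
    mesRho P x 5 (53/918) := by
  constructor
  · simp only [mapP5, h3, h4]; norm_num [min_def]
  · intro ρ' h; simp only [mapP5, h3, h4] at h
    have := min_le_right ρ' ((49:ℚ)/1020); have := min_le_left ρ' ((5:ℚ)/51); linarith
lemma rhoP6 {x : Finset F → ℚ} (h4 : x Bzc = 5/51) (h5 : x Bc = 5/51) :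
    mesRho P x 6 (1/11) := by
  constructor
  · simp only [mapP6, h4, h5]; norm_num [min_def]
  · intro ρ' h; simp only [mapP6, h4, h5] at h
    have := min_le_left ρ' ((5:ℚ)/51); linarith

-- afford lemmas
lemma affPX {x : Finset F → ℚ} {c : F} {v : ℚ} (hc : c ∈ Bx) (h1 : x Bx = v)
    (hv : 1/20 ≤ v) : mesAfford P x c := by
  unfold mesAfford supBudget; simp only [mapPX hc, h1]; linarith
lemma affPY {x : Finset F → ℚ} {c : F} {v w : ℚ} (hc : c ∈ By) (h2 : x By = v)
    (h3 : x Byz = w) (hv : 1/20 ≤ v) (hw : 1/20 ≤ w) : mesAfford P x c := by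
  unfold mesAfford supBudget; simp only [mapPY hc, h2, h3]; linarith
lemma affP5 {x : Finset F → ℚ} {v w : ℚ} (h3 : x Byz = v) (h4 : x Bzc = w)
    (h : 1 ≤ 10*v + 9*w) : mesAfford P x 5 := by
  unfold mesAfford supBudget; simp only [mapP5, h3, h4]; linarith

lemma noaffS3 {x : Finset F → ℚ} (hv : Vals x (49/1020) (49/1020) 0 (37/918) (5/51)) :
    ∀ c : F, ¬ mesAfford P x c := by
  obtain ⟨h1, h2, h3, h4, h5⟩ := hv
  intro c haff
  unfold mesAfford supBudget at haff
  rcases classes c with hc|hc|rfl|rfl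
  · rw [mapPX hc, h1] at haff; norm_num at haff
  · rw [mapPY hc, h2, h3] at haff; norm_num at haff
  · rw [mapP5, h3, h4] at haff; norm_num at haff
  · rw [mapP6, h4, h5] at haff; norm_num at haff

lemma A_s3 {x xf : Finset F → ℚ} {E : Finset F} {L : List F}
    (hv : Vals x (49/1020) (49/1020) 0 (37/918) (5/51))
    (h : mesPhase1 P x E L xf) :
    L = [] ∧ Vals xf (49/1020) (49/1020) 0 (37/918) (5/51) := by
  cases L with
  | nil => exact ⟨rfl, by rw [show xf = x from h]; exact hv⟩
  | cons c rest =>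
    exfalso
    obtain ⟨-, haff, -⟩ := h
    exact noaffS3 hv c haff

end MESaux
namespace MESaux

lemma A_s2 {x xf : Finset F → ℚ} {E : Finset F} {L : List F}
    (hv : Vals x (49/1020) (49/1020) (49/1020) (5/51) (5/51)) (hE5 : (5:F) ∉ E)
    (h : mesPhase1 P x E L xf) :
    (L = [] ∧ Vals xf (49/1020) (49/1020) (49/1020) (5/51) (5/51)) ∨
    (L = [5] ∧ Vals xf (49/1020) (49/1020) 0 (37/918) (5/51)) := by
  obtain ⟨h1, h2, h3, h4, h5⟩ := hv
  cases L with
  | nil => exact Or.inl ⟨rfl, by rw [show xf = x from h]; exact ⟨h1, h2, h3, h4, h5⟩⟩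
  | cons c rest =>
    right
    obtain ⟨hcE, haff, ρ, hρ, hmin, hrest⟩ := h
    have hρ5 : mesRho P x 5 (53/918) := rhoP5b h3 h4
    have hc5 : c = 5 := by
      rcases classes c with hc|hc|rfl|rfl
      · exfalso; unfold mesAfford supBudget at haff; rw [mapPX hc, h1] at haff
        norm_num at haff
      · exfalso; unfold mesAfford supBudget at haff; rw [mapPY hc, h2, h3] at haff
        norm_num at haff
      · rfl
      · exfalso
        have hle : ρ ≤ 53/918 := hmin 5 hE5 (affP5 h3 h4 (by norm_num)) _ hρ5
        have hsum := hρ.1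
        simp only [mapP6, h4, h5] at hsum
        have := min_le_left ρ ((5:ℚ)/51); linarith
    subst hc5
    have hρv : ρ = 53/918 := mesRho_unique hρ hρ5
    subst hρv
    obtain ⟨hL, hvf⟩ := A_s3 (x := fun b => if (5:F) ∈ b then x b - min (53/918) (x b) else x b)
      ⟨by simp [show (5:F) ∉ Bx from by decide, h1],
       by simp [show (5:F) ∉ By from by decide, h2],
       by simp [show (5:F) ∈ Byz from by decide, h3]; norm_num [min_def],
       by simp [show (5:F) ∈ Bzc from by decide, h4]; norm_num [min_def],
       by simp [show (5:F) ∉ Bc from by decide, h5]⟩ hrest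
    exact ⟨by rw [hL], hvf⟩

lemma A_sX {x xf : Finset F → ℚ} {E : Finset F} {L : List F}
    (hv : Vals x (49/1020) (5/51) (5/51) (5/51) (5/51)) (hE : E ⊆ Bx)
    (h : mesPhase1 P x E L xf) :
    (L = [] ∧ Vals xf (49/1020) (5/51) (5/51) (5/51) (5/51)) ∨
    (∃ cy ∈ By, (L = [cy] ∧ Vals xf (49/1020) (49/1020) (49/1020) (5/51) (5/51)) ∨
      (L = [cy, 5] ∧ Vals xf (49/1020) (49/1020) 0 (37/918) (5/51))) := by
  obtain ⟨h1, h2, h3, h4, h5⟩ := hv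
  cases L with
  | nil => exact Or.inl ⟨rfl, by rw [show xf = x from h]; exact ⟨h1, h2, h3, h4, h5⟩⟩
  | cons c rest =>
    right
    obtain ⟨hcE, haff, ρ, hρ, hmin, hrest⟩ := h
    have h3E : (3:F) ∉ E := fun hh => (show (3:F) ∉ Bx from by decide) (hE hh)
    have hρ3 : mesRho P x 3 (1/20) := rhoPY (by decide) h2 h3 (by norm_num) (by norm_num)
    have haff3 : mesAfford P x 3 := affPY (by decide) h2 h3 (by norm_num) (by norm_num)
    have hcY : c ∈ By := by
      rcases classes c with hc|hc|rfl|rfl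
      · exfalso; unfold mesAfford supBudget at haff; rw [mapPX hc, h1] at haff
        norm_num at haff
      · exact hc
      · exfalso
        have hle : ρ ≤ 1/20 := hmin 3 h3E haff3 _ hρ3
        have hsum := hρ.1
        simp only [mapP5, h3, h4] at hsum
        have := min_le_left ρ ((5:ℚ)/51); linarith
      · exfalso
        have hle : ρ ≤ 1/20 := hmin 3 h3E haff3 _ hρ3
        have hsum := hρ.1
        simp only [mapP6, h4, h5] at hsum
        have := min_le_left ρ ((5:ℚ)/51); linarith
    have hρv : ρ = 1/20 :=
      mesRho_unique hρ (rhoPY hcY h2 h3 (by norm_num) (by norm_num))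
    subst hρv
    refine ⟨c, hcY, ?_⟩
    obtain ⟨hcy1, hcy2, hcy3, hcy4, hcy5, hcy6⟩ := memY c hcY
    have hE5' : (5:F) ∉ insert c E := by
      simp only [Finset.mem_insert]
      rintro (rfl | hh)
      · exact hcy5 rfl
      · exact (show (5:F) ∉ Bx from by decide) (hE hh)
    have hnext := A_s2 (x := fun b => if c ∈ b then x b - min (1/20) (x b) else x b)
      ⟨by simp [hcy1, h1],
       by simp [hcY, h2]; norm_num [min_def],
       by simp [hcy2, h3]; norm_num [min_def],
       by simp [hcy3, h4],
       by simp [hcy4, h5]⟩ hE5' hrest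
    rcases hnext with ⟨hL, hvf⟩ | ⟨hL, hvf⟩
    · exact Or.inl ⟨by rw [hL], hvf⟩
    · exact Or.inr ⟨by rw [hL], hvf⟩

end MESaux
namespace MESaux

lemma A_sY {x xf : Finset F → ℚ} {E : Finset F} {L : List F}
    (hv : Vals x (5/51) (49/1020) (49/1020) (5/51) (5/51)) (hE : E ⊆ By)
    (h : mesPhase1 P x E L xf) :
    (L = [] ∧ Vals xf (5/51) (49/1020) (49/1020) (5/51) (5/51)) ∨
    (∃ cx ∈ Bx, (L = [cx] ∧ Vals xf (49/1020) (49/1020) (49/1020) (5/51) (5/51)) ∨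
      (L = [cx, 5] ∧ Vals xf (49/1020) (49/1020) 0 (37/918) (5/51))) := by
  obtain ⟨h1, h2, h3, h4, h5⟩ := hv
  cases L with
  | nil => exact Or.inl ⟨rfl, by rw [show xf = x from h]; exact ⟨h1, h2, h3, h4, h5⟩⟩
  | cons c rest =>
    right
    obtain ⟨hcE, haff, ρ, hρ, hmin, hrest⟩ := h
    have h0E : (0:F) ∉ E := fun hh => (show (0:F) ∉ By from by decide) (hE hh)
    have hρ0 : mesRho P x 0 (1/20) := rhoPX (by decide) h1 (by norm_num)
    have haff0 : mesAfford P x 0 := affPX (by decide) h1 (by norm_num)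
    have hcX : c ∈ Bx := by
      rcases classes c with hc|hc|rfl|rfl
      · exact hc
      · exfalso; unfold mesAfford supBudget at haff; rw [mapPY hc, h2, h3] at haff
        norm_num at haff
      · exfalso
        have hle : ρ ≤ 1/20 := hmin 0 h0E haff0 _ hρ0
        have hsum := hρ.1
        simp only [mapP5, h3, h4] at hsum
        have := min_le_left ρ ((49:ℚ)/1020); have := min_le_left ρ ((5:ℚ)/51); linarith
      · exfalso
        have hle : ρ ≤ 1/20 := hmin 0 h0E haff0 _ hρ0
        have hsum := hρ.1
        simp only [mapP6, h4, h5] at hsum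
        have := min_le_left ρ ((5:ℚ)/51); linarith
    have hρv : ρ = 1/20 := mesRho_unique hρ (rhoPX hcX h1 (by norm_num))
    subst hρv
    refine ⟨c, hcX, ?_⟩
    obtain ⟨hcx1, hcx2, hcx3, hcx4, hcx5, hcx6⟩ := memX c hcX
    have hE5' : (5:F) ∉ insert c E := by
      simp only [Finset.mem_insert]
      rintro (rfl | hh)
      · exact hcx5 rfl
      · exact (show (5:F) ∉ By from by decide) (hE hh)
    have hnext := A_s2 (x := fun b => if c ∈ b then x b - min (1/20) (x b) else x b)
      ⟨by simp [hcX, h1]; norm_num [min_def],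
       by simp [hcx1, h2],
       by simp [hcx2, h3],
       by simp [hcx3, h4],
       by simp [hcx4, h5]⟩ hE5' hrest
    rcases hnext with ⟨hL, hvf⟩ | ⟨hL, hvf⟩
    · exact Or.inl ⟨by rw [hL], hvf⟩
    · exact Or.inr ⟨by rw [hL], hvf⟩

lemma A_s0 {x xf : Finset F → ℚ} {L : List F}
    (hv : Vals x (5/51) (5/51) (5/51) (5/51) (5/51))
    (h : mesPhase1 P x ∅ L xf) :
    (L = [] ∧ Vals xf (5/51) (5/51) (5/51) (5/51) (5/51)) ∨
    (∃ cx ∈ Bx, L = [cx] ∧ Vals xf (49/1020) (5/51) (5/51) (5/51) (5/51)) ∨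
    (∃ cy ∈ By, L = [cy] ∧ Vals xf (5/51) (49/1020) (49/1020) (5/51) (5/51)) ∨
    (∃ cx ∈ Bx, ∃ cy ∈ By, (L = [cx, cy] ∨ L = [cy, cx]) ∧
      Vals xf (49/1020) (49/1020) (49/1020) (5/51) (5/51)) ∨
    (∃ cx ∈ Bx, ∃ cy ∈ By, (L = [cx, cy, 5] ∨ L = [cy, cx, 5]) ∧
      Vals xf (49/1020) (49/1020) 0 (37/918) (5/51)) := by
  obtain ⟨h1, h2, h3, h4, h5⟩ := hv
  cases L with
  | nil => exact Or.inl ⟨rfl, by rw [show xf = x from h]; exact ⟨h1, h2, h3, h4, h5⟩⟩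
  | cons c rest =>
    right
    obtain ⟨hcE, haff, ρ, hρ, hmin, hrest⟩ := h
    have hρ0 : mesRho P x 0 (1/20) := rhoPX (by decide) h1 (by norm_num)
    have haff0 : mesAfford P x 0 := affPX (by decide) h1 (by norm_num)
    have h0E : (0:F) ∉ (∅ : Finset F) := by simp
    have hcXY : c ∈ Bx ∨ c ∈ By := by
      rcases classes c with hc|hc|rfl|rfl
      · exact Or.inl hc
      · exact Or.inr hc
      · exfalso
        have hle : ρ ≤ 1/20 := hmin 0 h0E haff0 _ hρ0
        have hsum := hρ.1
        simp only [mapP5, h3, h4] at hsum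
        have := min_le_left ρ ((5:ℚ)/51); linarith
      · exfalso
        have hle : ρ ≤ 1/20 := hmin 0 h0E haff0 _ hρ0
        have hsum := hρ.1
        simp only [mapP6, h4, h5] at hsum
        have := min_le_left ρ ((5:ℚ)/51); linarith
    rcases hcXY with hcX | hcY
    · -- first elected is an x
      have hρv : ρ = 1/20 := mesRho_unique hρ (rhoPX hcX h1 (by norm_num))
      subst hρv
      obtain ⟨hcx1, hcx2, hcx3, hcx4, hcx5, hcx6⟩ := memX c hcX
      have hnext := A_sX (x := fun b => if c ∈ b then x b - min (1/20) (x b) else x b)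
        ⟨by simp [hcX, h1]; norm_num [min_def],
         by simp [hcx1, h2],
         by simp [hcx2, h3],
         by simp [hcx3, h4],
         by simp [hcx4, h5]⟩ (by simp [hcX]) hrest
      rcases hnext with ⟨hL, hvf⟩ | ⟨cy, hcy, ⟨hL, hvf⟩ | ⟨hL, hvf⟩⟩
      · exact Or.inl ⟨c, hcX, by rw [hL], hvf⟩
      · exact Or.inr (Or.inr (Or.inl ⟨c, hcX, cy, hcy, Or.inl (by rw [hL]), hvf⟩))
      · exact Or.inr (Or.inr (Or.inr ⟨c, hcX, cy, hcy, Or.inl (by rw [hL]), hvf⟩))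
    · -- first elected is a y
      have hρv : ρ = 1/20 :=
        mesRho_unique hρ (rhoPY hcY h2 h3 (by norm_num) (by norm_num))
      subst hρv
      obtain ⟨hcy1, hcy2, hcy3, hcy4, hcy5, hcy6⟩ := memY c hcY
      have hnext := A_sY (x := fun b => if c ∈ b then x b - min (1/20) (x b) else x b)
        ⟨by simp [hcy1, h1],
         by simp [hcY, h2]; norm_num [min_def],
         by simp [hcy2, h3]; norm_num [min_def],
         by simp [hcy3, h4],
         by simp [hcy4, h5]⟩ (by simp [hcY]) hrest
      rcases hnext with ⟨hL, hvf⟩ | ⟨cx, hcx, ⟨hL, hvf⟩ | ⟨hL, hvf⟩⟩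
      · exact Or.inr (Or.inl ⟨c, hcY, by rw [hL], hvf⟩)
      · exact Or.inr (Or.inr (Or.inl ⟨cx, hcx, c, hcY, Or.inr (by rw [hL]), hvf⟩))
      · exact Or.inr (Or.inr (Or.inr ⟨cx, hcx, c, hcY, Or.inr (by rw [hL]), hvf⟩))

end MESaux
namespace MESaux

lemma exBx : ∀ cx ∈ Bx, ∃ e ∈ Bx, e ≠ cx := by decide
lemma exBy : ∀ cy ∈ By, ∃ f ∈ By, f ≠ cy := by decide

lemma btPX {x : Finset F → ℚ} {d : F} {v : ℚ} (hd : d ∈ Bx) (h1 : x Bx = v) :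
    buyTime P x d = max 0 ((1 - 20*v)/20) := by
  unfold buyTime supBudget; rw [mapPX hd, cardPX hd, h1]; norm_num
lemma btPY {x : Finset F → ℚ} {d : F} {v w : ℚ} (hd : d ∈ By) (h2 : x By = v)
    (h3 : x Byz = w) : buyTime P x d = max 0 ((1 - (10*v + 10*w))/20) := by
  unfold buyTime supBudget; rw [mapPY hd, cardPY hd, h2, h3]; norm_num
lemma btP6 {x : Finset F → ℚ} {v w : ℚ} (h4 : x Bzc = v) (h5 : x Bc = w) :
    buyTime P x 6 = max 0 ((1 - (9*v + 2*w))/11) := by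
  unfold buyTime supBudget; rw [mapP6, cardP6, h4, h5]; norm_num

lemma A_p2 {x : Finset F → ℚ} {E : Finset F} {L : List F} {cx cy : F}
    (hv : Vals x (49/1020) (49/1020) 0 (37/918) (5/51))
    (hcx : cx ∈ Bx) (hcy : cy ∈ By)
    (hE : ∀ d : F, d ∈ E ↔ d = cx ∨ d = cy ∨ d = 5)
    (h : mesPhase2 P x E L) (hlen : L.length = 2) :
    ∃ d1 ∈ Bx, ∃ d2 ∈ By, L = [d1, d2] := by
  obtain ⟨h1, h2, h3, h4, h5⟩ := hv
  match L, hlen with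
  | [d1, d2], _ =>
  obtain ⟨hd1E, hd1ne, hd1min, hrest⟩ := h
  -- an unelected x-candidate exists
  obtain ⟨e, he, hecx⟩ : ∃ e ∈ Bx, e ≠ cx := exBx cx hcx
  have heE : e ∉ E := by
    rw [hE]
    obtain ⟨he1, -, -, -, he5, -⟩ := memX e he
    rintro (rfl | rfl | rfl)
    · exact hecx rfl
    · exact he1 hcy
    · exact he5 rfl
  have hbte : buyTime P x e = 1/510 := by
    rw [btPX he h1]; norm_num
  have hd1X : d1 ∈ Bx := by
    rcases classes d1 with hd|hd|rfl|rfl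
    · exact hd
    · exfalso
      have hb : buyTime P x d1 = 53/2040 := by rw [btPY hd h2 h3]; norm_num
      have := hd1min e heE (ne0PX he)
      rw [hb, hbte] at this; norm_num at this
    · exact absurd ((hE 5).2 (Or.inr (Or.inr rfl))) hd1E
    · exfalso
      have hb : buyTime P x 6 = 405/10098 := by rw [btP6 h4 h5]; norm_num
      have := hd1min e heE (ne0PX he)
      rw [hb, hbte] at this; norm_num at this
  refine ⟨d1, hd1X, ?_⟩
  have hbt1 : buyTime P x d1 = 1/510 := by rw [btPX hd1X h1]; norm_num
  obtain ⟨hd11, hd12, hd13, hd14, hd15, hd16⟩ := memX d1 hd1X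
  -- budgets after d1
  set x2 : Finset F → ℚ := fun b => if d1 ∈ b then 0 else x b + buyTime P x d1 with hx2
  have e1 : x2 Bx = 0 := by simp [hx2, hd1X]
  have e2 : x2 By = 1/20 := by simp [hx2, hd11, h2, hbt1]; norm_num
  have e3 : x2 Byz = 1/510 := by simp [hx2, hd12, h3, hbt1]; try norm_num
  have e4 : x2 Bzc = 97/2295 := by simp [hx2, hd13, h4, hbt1]; norm_num
  have e5 : x2 Bc = 1/10 := by simp [hx2, hd14, h5, hbt1]; norm_num
  obtain ⟨hd2E, hd2ne, hd2min, -⟩ := hrest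
  -- an unelected y-candidate exists
  obtain ⟨f, hf, hfcy⟩ : ∃ f ∈ By, f ≠ cy := exBy cy hcy
  have hfE : f ∉ insert d1 E := by
    obtain ⟨hf1, -, -, -, hf5, -⟩ := memY f hf
    simp only [Finset.mem_insert, hE]
    rintro (rfl | rfl | rfl | rfl)
    · exact hf1 hd1X
    · exact hf1 hcx
    · exact hfcy rfl
    · exact hf5 rfl
  have hbtf : buyTime P x2 f = 49/2040 := by rw [btPY hf e2 e3]; norm_num
  have hd2Y : d2 ∈ By := by
    rcases classes d2 with hd|hd|rfl|rfl
    · exfalso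
      have hb : buyTime P x2 d2 = 1/20 := by rw [btPX hd e1]; norm_num
      have := hd2min f hfE (ne0PY hf)
      rw [hb, hbtf] at this; norm_num at this
    · exact hd
    · exact absurd (Finset.mem_insert_of_mem ((hE 5).2 (Or.inr (Or.inr rfl)))) hd2E
    · exfalso
      have hb : buyTime P x2 6 = 963/25245 := by rw [btP6 e4 e5]; norm_num
      have := hd2min f hfE (ne0PY hf)
      rw [hb, hbtf] at this; norm_num at this
  exact ⟨d2, hd2Y, rfl⟩

end MESaux
namespace MESaux

lemma cardP : Multiset.card P = 51 := by decide

lemma A_main : ∀ W ∈ mes P 5, (6:F) ∉ W := by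
  rintro W ⟨L1, xf, hph, hbr⟩
  have hv0 : Vals (fun _ : Finset F => ((5:ℕ):ℚ)/((Multiset.card P : ℕ):ℚ))
      (5/51) (5/51) (5/51) (5/51) (5/51) := by
    refine ⟨?_, ?_, ?_, ?_, ?_⟩ <;> · rw [cardP]; norm_num
  have hchar := A_s0 hv0 hph
  rcases hbr with ⟨hlen, hW⟩ | ⟨hlen, hnoaff, L2, hp2, hlen2, hW⟩
  · -- phase 1 produced 5 candidates: impossible
    exfalso
    rcases hchar with ⟨hL, -⟩ | ⟨cx, -, hL, -⟩ | ⟨cy, -, hL, -⟩ |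
      ⟨cx, -, cy, -, hL | hL, -⟩ | ⟨cx, -, cy, -, hL | hL, -⟩ <;>
      rw [hL] at hlen <;> simp at hlen
  · rcases hchar with ⟨hL, hvf⟩ | ⟨cx, hcx, hL, hvf⟩ | ⟨cy, hcy, hL, hvf⟩ |
      ⟨cx, hcx, cy, hcy, hL, hvf⟩ | ⟨cx, hcx, cy, hcy, hL, hvf⟩
    · -- L1 = []: but candidate 0 is affordable
      exfalso
      refine hnoaff 0 (by rw [hL]; simp) (affPX (by decide) hvf.1 (by norm_num))
    · -- L1 = [cx]: candidate 3 affordable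
      exfalso
      obtain ⟨h1, h2, h3, h4, h5⟩ := hvf
      refine hnoaff 3 ?_ (affPY (by decide) h2 h3 (by norm_num) (by norm_num))
      rw [hL]; simp
      exact fun hh => (show (3:F) ∉ Bx from by decide) (hh ▸ hcx)
    · -- L1 = [cy]: candidate 0 affordable
      exfalso
      obtain ⟨h1, h2, h3, h4, h5⟩ := hvf
      refine hnoaff 0 ?_ (affPX (by decide) h1 (by norm_num))
      rw [hL]; simp
      exact fun hh => (show (0:F) ∉ By from by decide) (hh ▸ hcy)
    · -- L1 = [cx,cy] or [cy,cx]: candidate 5 affordable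
      exfalso
      obtain ⟨h1, h2, h3, h4, h5⟩ := hvf
      have h5cx : (5:F) ≠ cx := fun hh => (memX cx hcx).2.2.2.2.1 hh.symm
      have h5cy : (5:F) ≠ cy := fun hh => (memY cy hcy).2.2.2.2.1 hh.symm
      refine hnoaff 5 ?_ (affP5 h3 h4 (by norm_num))
      rcases hL with hL | hL <;> (rw [hL]; simp [h5cx, h5cy])
    · -- the real case
      have hE : ∀ d : F, d ∈ L1.toFinset ↔ d = cx ∨ d = cy ∨ d = 5 := by
        intro d
        rcases hL with hL | hL <;> (rw [hL]; simp; try tauto)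
      have hlenL1 : L1.length = 3 := by rcases hL with hL | hL <;> rw [hL] <;> rfl
      have hlen2' : L2.length = 2 := by
        rw [List.length_append, hlenL1] at hlen2; omega
      obtain ⟨d1, hd1, d2, hd2, hL2⟩ := A_p2 hvf hcx hcy hE hp2 hlen2'
      rw [hW]
      simp only [List.toFinset_append, Finset.mem_union, List.mem_toFinset]
      rintro (h6 | h6)
      · rcases (hE 6).1 (List.mem_toFinset.2 h6) with hh | hh | hh
        · exact (show (6:F) ∉ Bx from by decide) (hh ▸ hcx)
        · exact (show (6:F) ∉ By from by decide) (hh ▸ hcy)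
        · exact absurd hh (by decide)
      · rw [hL2] at h6
        simp only [List.mem_cons, List.not_mem_nil, or_false] at h6
        rcases h6 with hh | hh
        · exact (show (6:F) ∉ Bx from by decide) (hh ▸ hd1)
        · exact (show (6:F) ∉ By from by decide) (hh ▸ hd2)

end MESaux
namespace MESaux

lemma cardP' : Multiset.card P' = 50 := by decide

lemma rhoP'X {x : Finset F → ℚ} {c : F} {v : ℚ} (hc : c ∈ Bx) (h1 : x Bx = v)
    (hv : 1/20 ≤ v) : mesRho P' x c (1/20) := by
  constructor
  · simp only [mapP'X hc, h1, min_eq_left hv]; norm_num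
  · intro ρ' h; simp only [mapP'X hc, h1] at h
    have := min_le_left ρ' v; linarith
lemma rhoP'Y {x : Finset F → ℚ} {c : F} {v w : ℚ} (hc : c ∈ By) (h2 : x By = v)
    (h3 : x Byz = w) (hv : 1/20 ≤ v) (hw : 1/20 ≤ w) : mesRho P' x c (1/20) := by
  constructor
  · simp only [mapP'Y hc, h2, h3, min_eq_left hv, min_eq_left hw]; norm_num
  · intro ρ' h; simp only [mapP'Y hc, h2, h3] at h
    have := min_le_left ρ' v; have := min_le_left ρ' w; linarith
lemma affP'X {x : Finset F → ℚ} {c : F} {v : ℚ} (hc : c ∈ Bx) (h1 : x Bx = v)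
    (hv : 1/20 ≤ v) : mesAfford P' x c := by
  unfold mesAfford supBudget; simp only [mapP'X hc, h1]; linarith
lemma affP'Y {x : Finset F → ℚ} {c : F} {v w : ℚ} (hc : c ∈ By) (h2 : x By = v)
    (h3 : x Byz = w) (hv : 1/20 ≤ v) (hw : 1/20 ≤ w) : mesAfford P' x c := by
  unfold mesAfford supBudget; simp only [mapP'Y hc, h2, h3]; linarith

lemma ex_not_mem {S E : Finset F} (h : (E ∩ S).card < S.card) : ∃ d ∈ S, d ∉ E := by
  by_contra h'
  push_neg at h'
  have hSE : E ∩ S = S := Finset.inter_eq_right.2 h'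
  rw [hSE] at h
  exact lt_irrefl _ h

/-- Main induction for the reduced profile: as long as candidate 6 is not elected,
phase 1 can only elect at most two x's and two y's, and the supporters of candidate 6
keep their full budgets. -/
lemma A'_ind : ∀ (L : List F) (x : Finset F → ℚ) (E : Finset F) (i j : ℕ)
    (xf : Finset F → ℚ), i ≤ 2 → j ≤ 2 →
    x Bx = 1/10 - i/20 → x By = 1/10 - j/20 → x Byz = 1/10 - j/20 →
    x Bzc = 1/10 → x Bc = 1/10 →
    (E ∩ Bx).card = i → (E ∩ By).card = j →
    mesPhase1 P' x E L xf → (6:F) ∉ L →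
    L.length + i + j ≤ 4 ∧ xf Bzc = 1/10 ∧ xf Bc = 1/10 := by
  intro L
  induction L with
  | nil =>
    intro x E i j xf hi hj h1 h2 h3 h4 h5 hEi hEj hph h6
    rw [show xf = x from hph]
    exact ⟨by simpa using Nat.add_le_add hi hj, h4, h5⟩
  | cons c rest ih =>
    intro x E i j xf hi hj h1 h2 h3 h4 h5 hEi hEj hph h6
    obtain ⟨hcE, haff, ρ, hρ, hmin, hrest⟩ := hph
    have hc6 : c ≠ 6 := fun hh => h6 (by rw [hh]; exact List.mem_cons_self)
    have h6rest : (6:F) ∉ rest := fun hh => h6 (List.mem_cons_of_mem _ hh)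
    rcases classes c with hcX | hcY | rfl | rfl
    · -- c is an x
      have hi1 : i ≤ 1 := by
        by_contra hgt
        have hi2 : i = 2 := by omega
        unfold mesAfford supBudget at haff
        rw [mapP'X hcX, h1, hi2] at haff
        norm_num at haff
      have hvx : (1:ℚ)/20 ≤ 1/10 - i/20 := by
        interval_cases i <;> norm_num
      have hρv : ρ = 1/20 := mesRho_unique hρ (rhoP'X hcX h1 hvx)
      subst hρv
      obtain ⟨hc1, hc2, hc3, hc4, -, -⟩ := memX c hcX
      have hnext := ih (fun b => if c ∈ b then x b - min (1/20) (x b) else x b)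
        (insert c E) (i+1) j xf (by omega) hj
        (by rw [if_pos hcX, h1, min_eq_left hvx]; push_cast; ring)
        (by simp [hc1, h2]) (by simp [hc2, h3]) (by simp [hc3, h4]) (by simp [hc4, h5])
        (by rw [Finset.insert_inter_of_mem hcX,
              Finset.card_insert_of_notMem (fun hh => hcE (Finset.mem_inter.1 hh).1), hEi])
        (by rw [Finset.insert_inter_of_notMem hc1, hEj])
        hrest h6rest
      refine ⟨?_, hnext.2.1, hnext.2.2⟩
      have := hnext.1
      simp only [List.length_cons]
      omega
    · -- c is a y
      have hj1 : j ≤ 1 := by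
        by_contra hgt
        have hj2 : j = 2 := by omega
        unfold mesAfford supBudget at haff
        rw [mapP'Y hcY, h2, h3, hj2] at haff
        norm_num at haff
      have hvy : (1:ℚ)/20 ≤ 1/10 - j/20 := by
        interval_cases j <;> norm_num
      have hρv : ρ = 1/20 := mesRho_unique hρ (rhoP'Y hcY h2 h3 hvy hvy)
      subst hρv
      obtain ⟨hc1, hc2, hc3, hc4, -, -⟩ := memY c hcY
      have hnext := ih (fun b => if c ∈ b then x b - min (1/20) (x b) else x b)
        (insert c E) i (j+1) xf hi (by omega)
        (by simp [hc1, h1])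
        (by rw [if_pos hcY, h2, min_eq_left hvy]; push_cast; ring)
        (by rw [if_pos hc2, h3, min_eq_left hvy]; push_cast; ring)
        (by simp [hc3, h4]) (by simp [hc4, h5])
        (by rw [Finset.insert_inter_of_notMem hc1, hEi])
        (by rw [Finset.insert_inter_of_mem hcY,
              Finset.card_insert_of_notMem (fun hh => hcE (Finset.mem_inter.1 hh).1), hEj])
        hrest h6rest
      refine ⟨?_, hnext.2.1, hnext.2.2⟩
      have := hnext.1
      simp only [List.length_cons]
      omega
    · -- c = 5 : impossible
      exfalso
      have hj1 : j ≤ 1 := by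
        by_contra hgt
        have hj2 : j = 2 := by omega
        unfold mesAfford supBudget at haff
        rw [mapP'5, h3, h4, hj2] at haff
        norm_num at haff
      have hvy : (1:ℚ)/20 ≤ 1/10 - j/20 := by
        interval_cases j <;> norm_num
      -- comparator: an unelected y
      obtain ⟨d, hd, hdE⟩ : ∃ d ∈ By, d ∉ E := by
        apply ex_not_mem
        rw [hEj, show By.card = 2 from by decide]
        omega
      have hle : ρ ≤ 1/20 :=
        hmin d hdE (affP'Y hd h2 h3 hvy hvy) _ (rhoP'Y hd h2 h3 hvy hvy)
      have hsum := hρ.1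
      simp only [mapP'5, h3, h4] at hsum
      have hm1 := min_le_left ρ ((1:ℚ)/10 - j/20)
      have hm2 := min_le_left ρ ((1:ℚ)/10)
      linarith
    · exact absurd rfl hc6

end MESaux
namespace MESaux

lemma affP'6 {x : Finset F → ℚ} (h4 : x Bzc = 1/10) (h5 : x Bc = 1/10) :
    mesAfford P' x 6 := by
  unfold mesAfford supBudget; simp only [mapP'6, h4, h5]; norm_num

lemma A'_main : ∀ W ∈ mes P' 5, (6:F) ∈ W := by
  rintro W ⟨L1, xf, hph, hbr⟩
  by_cases h6 : (6:F) ∈ L1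
  · rcases hbr with ⟨-, hW⟩ | ⟨-, -, L2, -, -, hW⟩
    · rw [hW]; exact List.mem_toFinset.2 h6
    · rw [hW]; exact List.mem_toFinset.2 (List.mem_append_left _ h6)
  · exfalso
    have hind := A'_ind L1 _ ∅ 0 0 xf (by norm_num) (by norm_num)
      (by rw [cardP']; norm_num) (by rw [cardP']; norm_num) (by rw [cardP']; norm_num)
      (by rw [cardP']; norm_num) (by rw [cardP']; norm_num) (by simp) (by simp) hph h6
    rcases hbr with ⟨hlen, -⟩ | ⟨-, hnoaff, -⟩
    · have := hind.1; omega
    · exact hnoaff 6 (fun hh => h6 (List.mem_toFinset.1 hh)) (affP'6 hind.2.1 hind.2.2)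

end MESaux
namespace MESaux

lemma rhoP5a' {x : Finset F → ℚ} (h3 : x Byz = 1/10) (h4 : x Bzc = 1/10) :
    mesRho P' x 5 (1/19) := by
  constructor
  · simp only [mapP'5, h3, h4]; norm_num [min_def]
  · intro ρ' h; simp only [mapP'5, h3, h4] at h
    have := min_le_left ρ' ((1:ℚ)/10); linarith
lemma rhoP5b' {x : Finset F → ℚ} (h3 : x Byz = 1/20) (h4 : x Bzc = 1/10) :
    mesRho P' x 5 (1/18) := by
  constructor
  · simp only [mapP'5, h3, h4]; norm_num [min_def]
  · intro ρ' h; simp only [mapP'5, h3, h4] at h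
    have := min_le_right ρ' ((1:ℚ)/20); have := min_le_left ρ' ((1:ℚ)/10); linarith
lemma rhoP6' {x : Finset F → ℚ} (h4 : x Bzc = 1/10) (h5 : x Bc = 1/10) :
    mesRho P' x 6 (1/10) := by
  constructor
  · simp only [mapP'6, h4, h5]; norm_num [min_def]
  · intro ρ' h; simp only [mapP'6, h4, h5] at h
    have := min_le_left ρ' ((1:ℚ)/10); linarith

-- witness budget chain for the full profile
def u0 : Finset F → ℚ := fun _ => ((5:ℕ):ℚ) / ((Multiset.card P : ℕ):ℚ)
def u1 : Finset F → ℚ := fun b => if (0:F) ∈ b then u0 b - min (1/20) (u0 b) else u0 b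
def u2 : Finset F → ℚ := fun b => if (3:F) ∈ b then u1 b - min (1/20) (u1 b) else u1 b
def u3 : Finset F → ℚ := fun b => if (5:F) ∈ b then u2 b - min (53/918) (u2 b) else u2 b

lemma u0v : ∀ b, u0 b = 5/51 := by intro b; rw [u0, cardP]; norm_num
lemma u1v : Vals u1 (49/1020) (5/51) (5/51) (5/51) (5/51) := by
  refine ⟨?_, ?_, ?_, ?_, ?_⟩
  · simp [u1, u0v, show (0:F) ∈ Bx from by decide]; norm_num [min_def]
  · simp [u1, u0v, show (0:F) ∉ By from by decide]
  · simp [u1, u0v, show (0:F) ∉ Byz from by decide]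
  · simp [u1, u0v, show (0:F) ∉ Bzc from by decide]
  · simp [u1, u0v, show (0:F) ∉ Bc from by decide]
lemma u2v : Vals u2 (49/1020) (49/1020) (49/1020) (5/51) (5/51) := by
  have h := u1v
  refine ⟨?_, ?_, ?_, ?_, ?_⟩
  · simp [u2, h.1, show (3:F) ∉ Bx from by decide]
  · simp [u2, h.2.1, show (3:F) ∈ By from by decide]; norm_num [min_def]
  · simp [u2, h.2.2.1, show (3:F) ∈ Byz from by decide]; norm_num [min_def]
  · simp [u2, h.2.2.2.1, show (3:F) ∉ Bzc from by decide]
  · simp [u2, h.2.2.2.2, show (3:F) ∉ Bc from by decide]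
lemma u3v : Vals u3 (49/1020) (49/1020) 0 (37/918) (5/51) := by
  have h := u2v
  refine ⟨?_, ?_, ?_, ?_, ?_⟩
  · simp [u3, h.1, show (5:F) ∉ Bx from by decide]
  · simp [u3, h.2.1, show (5:F) ∉ By from by decide]
  · simp [u3, h.2.2.1, show (5:F) ∈ Byz from by decide]; norm_num [min_def]
  · simp [u3, h.2.2.2.1, show (5:F) ∈ Bzc from by decide]; norm_num [min_def]
  · simp [u3, h.2.2.2.2, show (5:F) ∉ Bc from by decide]

lemma memA : (([0,3,5] ++ [1,4] : List F)).toFinset ∈ mes P 5 := by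
  refine ⟨[0,3,5], u3, ?_, ?_⟩
  · show mesPhase1 P u0 ∅ [0,3,5] u3
    have h0 := u0v
    have h1 := u1v
    have h2 := u2v
    refine ⟨by simp, affPX (by decide) (h0 Bx) (by norm_num), 1/20,
      rhoPX (by decide) (h0 Bx) (by norm_num), ?_, ?_⟩
    · intro d hd hdaff ρ' hρ'
      rcases classes d with hd'|hd'|rfl|rfl
      · rw [mesRho_unique hρ' (rhoPX hd' (h0 Bx) (by norm_num))]
      · rw [mesRho_unique hρ' (rhoPY hd' (h0 By) (h0 Byz) (by norm_num) (by norm_num))]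
      · rw [mesRho_unique hρ' (rhoP5a (h0 Byz) (h0 Bzc))]; norm_num
      · rw [mesRho_unique hρ' (rhoP6 (h0 Bzc) (h0 Bc))]; norm_num
    · show mesPhase1 P u1 (insert 0 ∅) [3,5] u3
      refine ⟨by decide, affPY (by decide) h1.2.1 h1.2.2.1 (by norm_num) (by norm_num),
        1/20, rhoPY (by decide) h1.2.1 h1.2.2.1 (by norm_num) (by norm_num), ?_, ?_⟩
      · intro d hd hdaff ρ' hρ'
        rcases classes d with hd'|hd'|rfl|rfl
        · exfalso; unfold mesAfford supBudget at hdaff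
          rw [mapPX hd', h1.1] at hdaff; norm_num at hdaff
        · rw [mesRho_unique hρ' (rhoPY hd' h1.2.1 h1.2.2.1 (by norm_num) (by norm_num))]
        · rw [mesRho_unique hρ' (rhoP5a h1.2.2.1 h1.2.2.2.1)]; norm_num
        · rw [mesRho_unique hρ' (rhoP6 h1.2.2.2.1 h1.2.2.2.2)]; norm_num
      · show mesPhase1 P u2 (insert 3 (insert 0 ∅)) [5] u3
        refine ⟨by decide, affP5 h2.2.2.1 h2.2.2.2.1 (by norm_num),
          53/918, rhoP5b h2.2.2.1 h2.2.2.2.1, ?_, ?_⟩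
        · intro d hd hdaff ρ' hρ'
          rcases classes d with hd'|hd'|rfl|rfl
          · exfalso; unfold mesAfford supBudget at hdaff
            rw [mapPX hd', h2.1] at hdaff; norm_num at hdaff
          · exfalso; unfold mesAfford supBudget at hdaff
            rw [mapPY hd', h2.2.1, h2.2.2.1] at hdaff; norm_num at hdaff
          · rw [mesRho_unique hρ' (rhoP5b h2.2.2.1 h2.2.2.2.1)]
          · rw [mesRho_unique hρ' (rhoP6 h2.2.2.2.1 h2.2.2.2.2)]; norm_num
        · show mesPhase1 P u3 (insert 5 (insert 3 (insert 0 ∅))) [] u3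
          rfl
  · right
    have h3 := u3v
    have hbt1 : buyTime P u3 1 = 1/510 := by
      rw [btPX (by decide) h3.1]; norm_num
    refine ⟨by norm_num, fun c _ => noaffS3 h3 c, [1,4], ?_, rfl, rfl⟩
    refine ⟨by decide, ne0PX (by decide), ?_, ?_⟩
    · intro d hd hdne
      rw [hbt1]
      rcases classes d with hd'|hd'|rfl|rfl
      · rw [btPX hd' h3.1]; norm_num
      · rw [btPY hd' h3.2.1 h3.2.2.1]; norm_num
      · exact absurd (by decide) hd
      · rw [btP6 h3.2.2.2.1 h3.2.2.2.2]; norm_num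
    · show mesPhase2 P (fun b => if (1:F) ∈ b then 0 else u3 b + buyTime P u3 1)
        (insert 1 ([0,3,5] : List F).toFinset) [4]
      set u4 : Finset F → ℚ := fun b => if (1:F) ∈ b then 0 else u3 b + buyTime P u3 1
        with hu4
      have h41 : u4 Bx = 0 := by simp [hu4, show (1:F) ∈ Bx from by decide]
      have h42 : u4 By = 1/20 := by
        simp [hu4, show (1:F) ∉ By from by decide, h3.2.1, hbt1]; norm_num
      have h43 : u4 Byz = 1/510 := by
        simp [hu4, show (1:F) ∉ Byz from by decide, h3.2.2.1, hbt1]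
      have h44 : u4 Bzc = 97/2295 := by
        simp [hu4, show (1:F) ∉ Bzc from by decide, h3.2.2.2.1, hbt1]; norm_num
      have h45 : u4 Bc = 1/10 := by
        simp [hu4, show (1:F) ∉ Bc from by decide, h3.2.2.2.2, hbt1]; norm_num
      refine ⟨by decide, ne0PY (by decide), ?_, trivial⟩
      intro d hd hdne
      rw [btPY (by decide) h42 h43]
      rcases classes d with hd'|hd'|rfl|rfl
      · rw [btPX hd' h41]; norm_num
      · rw [btPY hd' h42 h43]
      · exact absurd (by decide) hd
      · rw [btP6 h44 h45]; norm_num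

end MESaux
namespace MESaux

-- witness budget chain for the reduced profile
def v0 : Finset F → ℚ := fun _ => ((5:ℕ):ℚ) / ((Multiset.card P' : ℕ):ℚ)
def v1 : Finset F → ℚ := fun b => if (0:F) ∈ b then v0 b - min (1/20) (v0 b) else v0 b
def v2 : Finset F → ℚ := fun b => if (1:F) ∈ b then v1 b - min (1/20) (v1 b) else v1 b
def v3 : Finset F → ℚ := fun b => if (3:F) ∈ b then v2 b - min (1/20) (v2 b) else v2 b
def v4 : Finset F → ℚ := fun b => if (4:F) ∈ b then v3 b - min (1/20) (v3 b) else v3 b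
def v5 : Finset F → ℚ := fun b => if (6:F) ∈ b then v4 b - min (1/10) (v4 b) else v4 b

lemma v0v : ∀ b, v0 b = 1/10 := by intro b; rw [v0, cardP']; norm_num
lemma v1v : Vals v1 (1/20) (1/10) (1/10) (1/10) (1/10) := by
  refine ⟨?_, ?_, ?_, ?_, ?_⟩
  · simp [v1, v0v, show (0:F) ∈ Bx from by decide]; norm_num [min_def]
  · simp [v1, v0v, show (0:F) ∉ By from by decide]
  · simp [v1, v0v, show (0:F) ∉ Byz from by decide]
  · simp [v1, v0v, show (0:F) ∉ Bzc from by decide]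
  · simp [v1, v0v, show (0:F) ∉ Bc from by decide]
lemma v2v : Vals v2 0 (1/10) (1/10) (1/10) (1/10) := by
  have h := v1v
  refine ⟨?_, ?_, ?_, ?_, ?_⟩
  · simp [v2, h.1, show (1:F) ∈ Bx from by decide]
  · simp [v2, h.2.1, show (1:F) ∉ By from by decide]
  · simp [v2, h.2.2.1, show (1:F) ∉ Byz from by decide]
  · simp [v2, h.2.2.2.1, show (1:F) ∉ Bzc from by decide]
  · simp [v2, h.2.2.2.2, show (1:F) ∉ Bc from by decide]
lemma v3v : Vals v3 0 (1/20) (1/20) (1/10) (1/10) := by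
  have h := v2v
  refine ⟨?_, ?_, ?_, ?_, ?_⟩
  · simp [v3, h.1, show (3:F) ∉ Bx from by decide]
  · simp [v3, h.2.1, show (3:F) ∈ By from by decide]; norm_num [min_def]
  · simp [v3, h.2.2.1, show (3:F) ∈ Byz from by decide]; norm_num [min_def]
  · simp [v3, h.2.2.2.1, show (3:F) ∉ Bzc from by decide]
  · simp [v3, h.2.2.2.2, show (3:F) ∉ Bc from by decide]
lemma v4v : Vals v4 0 0 0 (1/10) (1/10) := by
  have h := v3v
  refine ⟨?_, ?_, ?_, ?_, ?_⟩
  · simp [v4, h.1, show (4:F) ∉ Bx from by decide]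
  · simp [v4, h.2.1, show (4:F) ∈ By from by decide]
  · simp [v4, h.2.2.1, show (4:F) ∈ Byz from by decide]
  · simp [v4, h.2.2.2.1, show (4:F) ∉ Bzc from by decide]
  · simp [v4, h.2.2.2.2, show (4:F) ∉ Bc from by decide]

lemma memA' : (([0,1,3,4,6] : List F)).toFinset ∈ mes P' 5 := by
  refine ⟨[0,1,3,4,6], v5, ?_, Or.inl ⟨rfl, rfl⟩⟩
  show mesPhase1 P' v0 ∅ [0,1,3,4,6] v5
  have h0 := v0v
  have h1 := v1v
  have h2 := v2v
  have h3 := v3v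
  have h4 := v4v
  refine ⟨by simp, affP'X (by decide) (h0 Bx) (by norm_num), 1/20,
    rhoP'X (by decide) (h0 Bx) (by norm_num), ?_, ?_⟩
  · intro d hd hdaff ρ' hρ'
    rcases classes d with hd'|hd'|rfl|rfl
    · rw [mesRho_unique hρ' (rhoP'X hd' (h0 Bx) (by norm_num))]
    · rw [mesRho_unique hρ' (rhoP'Y hd' (h0 By) (h0 Byz) (by norm_num) (by norm_num))]
    · rw [mesRho_unique hρ' (rhoP5a' (h0 Byz) (h0 Bzc))]; norm_num
    · rw [mesRho_unique hρ' (rhoP6' (h0 Bzc) (h0 Bc))]; norm_num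
  · show mesPhase1 P' v1 (insert 0 ∅) [1,3,4,6] v5
    refine ⟨by decide, affP'X (by decide) h1.1 (by norm_num), 1/20,
      rhoP'X (by decide) h1.1 (by norm_num), ?_, ?_⟩
    · intro d hd hdaff ρ' hρ'
      rcases classes d with hd'|hd'|rfl|rfl
      · rw [mesRho_unique hρ' (rhoP'X hd' h1.1 (by norm_num))]
      · rw [mesRho_unique hρ' (rhoP'Y hd' h1.2.1 h1.2.2.1 (by norm_num) (by norm_num))]
      · rw [mesRho_unique hρ' (rhoP5a' h1.2.2.1 h1.2.2.2.1)]; norm_num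
      · rw [mesRho_unique hρ' (rhoP6' h1.2.2.2.1 h1.2.2.2.2)]; norm_num
    · show mesPhase1 P' v2 (insert 1 (insert 0 ∅)) [3,4,6] v5
      refine ⟨by decide, affP'Y (by decide) h2.2.1 h2.2.2.1 (by norm_num) (by norm_num),
        1/20, rhoP'Y (by decide) h2.2.1 h2.2.2.1 (by norm_num) (by norm_num), ?_, ?_⟩
      · intro d hd hdaff ρ' hρ'
        rcases classes d with hd'|hd'|rfl|rfl
        · exfalso; unfold mesAfford supBudget at hdaff
          rw [mapP'X hd', h2.1] at hdaff; norm_num at hdaff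
        · rw [mesRho_unique hρ' (rhoP'Y hd' h2.2.1 h2.2.2.1 (by norm_num) (by norm_num))]
        · rw [mesRho_unique hρ' (rhoP5a' h2.2.2.1 h2.2.2.2.1)]; norm_num
        · rw [mesRho_unique hρ' (rhoP6' h2.2.2.2.1 h2.2.2.2.2)]; norm_num
      · show mesPhase1 P' v3 (insert 3 (insert 1 (insert 0 ∅))) [4,6] v5
        refine ⟨by decide, affP'Y (by decide) h3.2.1 h3.2.2.1 (by norm_num) (by norm_num),
          1/20, rhoP'Y (by decide) h3.2.1 h3.2.2.1 (by norm_num) (by norm_num), ?_, ?_⟩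
        · intro d hd hdaff ρ' hρ'
          rcases classes d with hd'|hd'|rfl|rfl
          · exfalso; unfold mesAfford supBudget at hdaff
            rw [mapP'X hd', h3.1] at hdaff; norm_num at hdaff
          · rw [mesRho_unique hρ' (rhoP'Y hd' h3.2.1 h3.2.2.1 (by norm_num) (by norm_num))]
          · rw [mesRho_unique hρ' (rhoP5b' h3.2.2.1 h3.2.2.2.1)]; norm_num
          · rw [mesRho_unique hρ' (rhoP6' h3.2.2.2.1 h3.2.2.2.2)]; norm_num
        · show mesPhase1 P' v4 (insert 4 (insert 3 (insert 1 (insert 0 ∅)))) [6] v5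
          refine ⟨by decide, affP'6 h4.2.2.2.1 h4.2.2.2.2, 1/10,
            rhoP6' h4.2.2.2.1 h4.2.2.2.2, ?_, ?_⟩
          · intro d hd hdaff ρ' hρ'
            rcases classes d with hd'|hd'|rfl|rfl
            · exfalso; unfold mesAfford supBudget at hdaff
              rw [mapP'X hd', h4.1] at hdaff; norm_num at hdaff
            · exfalso; unfold mesAfford supBudget at hdaff
              rw [mapP'Y hd', h4.2.1, h4.2.2.1] at hdaff; norm_num at hdaff
            · exfalso; unfold mesAfford supBudget at hdaff
              rw [mapP'5, h4.2.2.1, h4.2.2.2.1] at hdaff; norm_num at hdaff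
            · rw [mesRho_unique hρ' (rhoP6' h4.2.2.2.1 h4.2.2.2.2)]
          · show mesPhase1 P' v5
              (insert 6 (insert 4 (insert 3 (insert 1 (insert 0 ∅))))) [] v5
            rfl

end MESaux

/-- The method of equal shares violates participation for unrepresented voters:
for `k = 5` and the profile `20×{x₁,x₂,x₃}, 10×{y₁,y₂}, 10×{y₁,y₂,z}, 9×{z,c}, 2×{c}`,
with `i` one of the two voters approving only `c` (candidate `6`), every winning
committee for `A` avoids all of `i`'s approved candidates (`c` is in no winning
committee for `A`), yet `c` is in every winning committee for `A₋ᵢ` and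
`f(A₋ᵢ,k) ≻ᵢ f(A,k)`. -/
theorem mes_fails_participation_unrepresented :
    validProfile counterProfile ∧ ({6} : Finset (Fin 7)) ∈ counterProfile ∧
    (∀ W ∈ mes counterProfile 5, W ∩ ({6} : Finset (Fin 7)) = ∅) ∧
    (∀ W ∈ mes (counterProfile.erase ({6} : Finset (Fin 7))) 5, (6 : Fin 7) ∈ W) ∧
    KellyStrict ({6} : Finset (Fin 7))
      (mes (counterProfile.erase ({6} : Finset (Fin 7))) 5)
      (mes counterProfile 5) := by

  have hEmp : ∀ W ∈ mes counterProfile 5, W ∩ ({6} : Finset (Fin 7)) = ∅ := by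
    intro W hW
    have h6 := MESaux.A_main W hW
    apply Finset.eq_empty_iff_forall_notMem.2
    intro a ha
    rw [Finset.mem_inter, Finset.mem_singleton] at ha
    exact h6 (ha.2 ▸ ha.1)
  refine ⟨⟨by decide, by decide⟩, by decide, hEmp, MESaux.A'_main, ?_, ?_⟩
  · intro W _ W' hW'
    rw [hEmp W' hW']
    simp
  · refine ⟨_, MESaux.memA', _, MESaux.memA, ?_⟩
    rw [hEmp _ MESaux.memA]
    decide
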